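/- In the bipartite graph G whose parts are the a-element subsets and the (a-1)-element subsets of an m-element set Y (with m ≥ 2a-1), and whose edges join disjoint sets, every independent set I satisfies |I ∩ {a-sets}|/C(m,a) + |I ∩ {(a-1)-sets}|/C(m,a-1) ≤ 1. -/

import Mathlib

open Finset

/-- Counting lemma: sets of size `k` inside `Y` disjoint from `S ⊆ Y`. -/
lemma filter_disjoint_eq (Y S : Finset ℕ) (hS : S ⊆ Y) (k : ℕ) :
    (Y.powersetCard k).filter (fun T => Disjoint S T) = (Y \ S).powersetCard k := by
  ext T
  simp only [mem_filter, mem_powersetCard, subset_sdiff]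
  constructor
  · rintro ⟨⟨h1, h2⟩, h3⟩; exact ⟨⟨h1, h3.symm⟩, h2⟩
  · rintro ⟨⟨h1, h3⟩, h2⟩; exact ⟨⟨h1, h2⟩, h3.symm⟩

lemma card_filter_disjoint (Y S : Finset ℕ) (hS : S ⊆ Y) (k : ℕ) :
    ((Y.powersetCard k).filter (fun T => Disjoint S T)).card
      = (Y.card - S.card).choose k := by
  rw [filter_disjoint_eq Y S hS, card_powersetCard, card_sdiff_of_subset hS]

/-- The biregularity identity. -/
lemma choose_identity (a m : ℕ) (ha : 1 ≤ a) (hm : 2 * a - 1 ≤ m) :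
    m.choose a * (m - a).choose (a - 1) = m.choose (a - 1) * (m - (a - 1)).choose a := by
  have h1 : (2 * a - 1) - a = a - 1 := by omega
  have h2 : (2 * a - 1) - (a - 1) = a := by omega
  have e1 := Nat.choose_mul (n := m) (k := 2 * a - 1) (s := a) (by omega)
  have e2 := Nat.choose_mul (n := m) (k := 2 * a - 1) (s := a - 1) (by omega)
  have e3 : (2 * a - 1).choose a = (2 * a - 1).choose (a - 1) := by
    rw [← Nat.choose_symm (by omega : a ≤ 2 * a - 1), h1]
  rw [h1] at e1
  rw [h2] at e2
  rw [← e1, e3, e2]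

theorem independent_set_bound (a m : ℕ) (ha : 1 ≤ a) (hm : 2 * a - 1 ≤ m)
    (Y : Finset ℕ) (hY : Y.card = m)
    (I : Finset (Finset ℕ))
    (hI : I ⊆ Y.powersetCard a ∪ Y.powersetCard (a - 1))
    (hind : ∀ S ∈ I, ∀ T ∈ I, S.card = a → T.card = a - 1 → ¬ Disjoint S T) :
    ((I ∩ Y.powersetCard a).card : ℝ) / (m.choose a : ℝ) +
      ((I ∩ Y.powersetCard (a - 1)).card : ℝ) / (m.choose (a - 1) : ℝ) ≤ 1 := by
  set A := Y.powersetCard a with hA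
  set B := Y.powersetCard (a - 1) with hB
  set IA := I ∩ A with hIA
  set IB := I ∩ B with hIB
  have hIAsub : IA ⊆ A := inter_subset_right
  have hIBsub : IB ⊆ B := inter_subset_right
  -- degrees
  set dA := (m - a).choose (a - 1) with hdA
  set dB := (m - (a - 1)).choose a with hdB
  -- key counting inequality in ℕ
  have hcount : IA.card * dA ≤ (B.card - IB.card) * dB := by
    have step1 : IA.card * dA = ∑ S ∈ IA, ((B \ IB).filter (fun T => Disjoint S T)).card := by
      rw [Finset.sum_congr rfl, Finset.sum_const, smul_eq_mul]
      intro S hS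
      have hSI : S ∈ I := (mem_inter.mp hS).1
      have hSA : S ∈ A := (mem_inter.mp hS).2
      rw [mem_powersetCard] at hSA
      have hfil : (B \ IB).filter (fun T => Disjoint S T)
          = B.filter (fun T => Disjoint S T) := by
        apply Finset.Subset.antisymm
        · exact Finset.filter_subset_filter _ sdiff_subset
        · intro T hT
          rw [mem_filter] at hT
          rw [mem_filter, mem_sdiff]
          refine ⟨⟨hT.1, ?_⟩, hT.2⟩
          intro hTI
          have hTB := hT.1
          rw [hB, mem_powersetCard] at hTB
          exact hind S hSI T (mem_inter.mp hTI).1 hSA.2 hTB.2 hT.2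
      rw [hfil, hB, card_filter_disjoint Y S hSA.1, hY, hSA.2]
    have step2 : ∑ S ∈ IA, ((B \ IB).filter (fun T => Disjoint S T)).card
        = ∑ T ∈ B \ IB, (IA.filter (fun S => Disjoint S T)).card := by
      simp only [Finset.card_filter]
      rw [Finset.sum_comm]
    have step3 : ∀ T ∈ B \ IB, (IA.filter (fun S => Disjoint S T)).card ≤ dB := by
      intro T hT
      have hTB : T ∈ B := (mem_sdiff.mp hT).1
      rw [hB, mem_powersetCard] at hTB
      calc (IA.filter (fun S => Disjoint S T)).card
          ≤ (A.filter (fun S => Disjoint S T)).card := by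
            apply Finset.card_le_card
            exact Finset.filter_subset_filter _ hIAsub
        _ = dB := by
            have : (A.filter (fun S => Disjoint S T))
                = (A.filter (fun S => Disjoint T S)) := by
              apply Finset.filter_congr; intro S _; simp [disjoint_comm]
            rw [this, hA, card_filter_disjoint Y T hTB.1, hY, hTB.2]
    calc IA.card * dA = ∑ T ∈ B \ IB, (IA.filter (fun S => Disjoint S T)).card := by
          rw [step1, step2]
      _ ≤ ∑ _T ∈ B \ IB, dB := Finset.sum_le_sum step3
      _ = (B.card - IB.card) * dB := by
          rw [Finset.sum_const, smul_eq_mul, card_sdiff_of_subset hIBsub]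
  -- cardinalities and positivity
  have hAcard : A.card = m.choose a := by rw [hA, card_powersetCard, hY]
  have hBcard : B.card = m.choose (a - 1) := by rw [hB, card_powersetCard, hY]
  have hdApos : 0 < dA := Nat.choose_pos (by omega)
  have hdBpos : 0 < dB := Nat.choose_pos (by omega)
  have hApos : 0 < m.choose a := Nat.choose_pos (by omega)
  have hBpos : 0 < m.choose (a - 1) := Nat.choose_pos (by omega)
  have hid := choose_identity a m ha hm
  -- go to ℝ
  have hIBle : IB.card ≤ B.card := Finset.card_le_card hIBsub
  have hR : (IA.card : ℝ) * dA ≤ ((B.card : ℝ) - IB.card) * dB := by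
    have h : ((IA.card * dA : ℕ) : ℝ) ≤ (((B.card - IB.card) * dB : ℕ) : ℝ) :=
      Nat.cast_le.mpr hcount
    rw [Nat.cast_mul, Nat.cast_mul, Nat.cast_sub hIBle] at h
    exact h
  -- divide
  rw [div_add_div _ _ (by positivity) (by positivity), div_le_one (by positivity)]
  have key : (IA.card : ℝ) * (m.choose (a-1) : ℝ) * dB + (IB.card : ℝ) * (m.choose a : ℝ) * dB
      ≤ (m.choose a : ℝ) * (m.choose (a-1) : ℝ) * dB := by
    have h1 : (IA.card : ℝ) * (m.choose (a-1) : ℝ) * dB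
        = (IA.card : ℝ) * dA * (m.choose a : ℝ) := by
      have : (m.choose a : ℝ) * dA = (m.choose (a-1) : ℝ) * dB := by exact_mod_cast hid
      ring_nf
      nlinarith [this]
    have h2 : (IA.card : ℝ) * dA * (m.choose a : ℝ)
        ≤ ((B.card : ℝ) - IB.card) * dB * (m.choose a : ℝ) := by
      apply mul_le_mul_of_nonneg_right hR (by positivity)
    have h3 : ((B.card : ℝ) - IB.card) * dB * (m.choose a : ℝ)
        = (m.choose a : ℝ) * (m.choose (a-1) : ℝ) * dB - (IB.card : ℝ) * (m.choose a : ℝ) * dB := by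
      rw [hBcard]; ring
    nlinarith [h1, h2, h3]
  have hdBr : (0:ℝ) < dB := by exact_mod_cast hdBpos
  nlinarith [key, hdBr]
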